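/- Let b ∈ (0,1), 0 ≤ p < -ln(b), and suppose P(A_m) ≤ M·b^m for some M > 0 and all m ≥ n_0. Let O := ∑_{m=n_0}^∞ 1(A_m). Then E[e^{pO}] ≤ 1 + M·b^{n_0 - 1}/(1 - e^p·b). -/

import Mathlib

open MeasureTheory ProbabilityTheory Set
open scoped ENNReal

/-- `e^{r·x}` for an extended-nonnegative count `x`, with value `⊤` at `x = ⊤`. -/
noncomputable def eexp (r : ℝ) (x : ℝ≥0∞) : ℝ≥0∞ :=
  if x = ⊤ then ⊤ else ENNReal.ofReal (Real.exp (r * x.toReal))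

/-- If `P(Aₘ) ≤ M·bᵐ` for `m ≥ n₀` with `b ∈ (0,1)`, `M > 0`, and `0 ≤ p < -ln b`,
then for the count `O = ∑_{m≥n₀} 1(Aₘ)` we have
`E[e^{pO}] ≤ 1 + M·b^{n₀-1}/(1 - eᵖ·b)`. -/
lemma exp_card_le {p : ℝ} (hp : 0 ≤ p) (S : Finset ℕ) :
    Real.exp (p * S.card) - 1 ≤ ∑ m ∈ S, (Real.exp (p * (m + 1)) - Real.exp (p * m)) := by
  induction S using Finset.induction_on_max with
  | empty => simp
  | insert a s ha ih =>
    have hcard : (s.card : ℝ) ≤ a := by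
      have : s ⊆ Finset.range a := fun x hx => Finset.mem_range.mpr (ha x hx)
      exact_mod_cast (Finset.card_le_card this).trans_eq (Finset.card_range a)
    have hnot : a ∉ s := fun h => lt_irrefl a (ha a h)
    rw [Finset.sum_insert hnot, Finset.card_insert_of_notMem hnot]
    have key : Real.exp (p * (s.card + 1)) - Real.exp (p * s.card)
        ≤ Real.exp (p * (a + 1)) - Real.exp (p * a) := by
      have h1 : Real.exp (p * (s.card + 1)) - Real.exp (p * s.card)
          = Real.exp (p * s.card) * (Real.exp p - 1) := by
        rw [mul_add, Real.exp_add]; ring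
      have h2 : Real.exp (p * (a + 1)) - Real.exp (p * a)
          = Real.exp (p * a) * (Real.exp p - 1) := by
        rw [mul_add, Real.exp_add]; ring
      rw [h1, h2]
      have := Real.one_le_exp hp
      exact mul_le_mul_of_nonneg_right
        (Real.exp_le_exp.mpr (mul_le_mul_of_nonneg_left hcard hp)) (by linarith)
    push_cast
    linarith

lemma pointwise_bound {Ω : Type*} (A : ℕ → Set Ω) (n₀ : ℕ) {p : ℝ} (hp : 0 ≤ p) (ω : Ω)
    (hfin : (∑' m : ℕ, Set.indicator (A (n₀ + m)) (fun _ => (1 : ℝ≥0∞)) ω) ≠ ⊤) :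
    eexp p (∑' m : ℕ, Set.indicator (A (n₀ + m)) (fun _ => (1 : ℝ≥0∞)) ω)
      ≤ 1 + ∑' m : ℕ, ENNReal.ofReal (Real.exp (p * (m + 1)) - Real.exp (p * m)) *
          Set.indicator (A (n₀ + m)) (fun _ => (1 : ℝ≥0∞)) ω := by
  set S : Set ℕ := {m | ω ∈ A (n₀ + m)} with hS
  have hrw : ∀ m : ℕ, Set.indicator (A (n₀ + m)) (fun _ => (1 : ℝ≥0∞)) ω
      = S.indicator (fun _ => 1) m := by
    intro m
    by_cases h : ω ∈ A (n₀ + m) <;> simp [Set.indicator, hS, h]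
  have hO : (∑' m : ℕ, Set.indicator (A (n₀ + m)) (fun _ => (1 : ℝ≥0∞)) ω) = S.encard := by
    simp_rw [hrw]
    rw [← tsum_subtype S (fun _ => (1 : ℝ≥0∞))]
    exact ENNReal.tsum_set_one S
  have hSfin : S.Finite := by
    rw [hO] at hfin
    rw [← Set.encard_ne_top_iff]
    intro h
    rw [h] at hfin
    simp at hfin
  set T := hSfin.toFinset with hT
  have hOcard : (∑' m : ℕ, Set.indicator (A (n₀ + m)) (fun _ => (1 : ℝ≥0∞)) ω) = T.card := by
    rw [hO, hSfin.encard_eq_coe_toFinset_card]; simp; rfl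
  have hLHS : eexp p (∑' m : ℕ, Set.indicator (A (n₀ + m)) (fun _ => (1 : ℝ≥0∞)) ω)
      = ENNReal.ofReal (Real.exp (p * T.card)) := by
    rw [hOcard, eexp]
    simp
  have hRHS : (∑' m : ℕ, ENNReal.ofReal (Real.exp (p * (m + 1)) - Real.exp (p * m)) *
      Set.indicator (A (n₀ + m)) (fun _ => (1 : ℝ≥0∞)) ω)
      = ∑ m ∈ T, ENNReal.ofReal (Real.exp (p * (m + 1)) - Real.exp (p * m)) := by
    rw [tsum_eq_sum (s := T) ?h]
    · refine Finset.sum_congr rfl fun m hm => ?_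
      have : ω ∈ A (n₀ + m) := by
        have := hSfin.mem_toFinset.mp hm; exact this
      simp [Set.indicator, this]
    · intro m hm
      have : ω ∉ A (n₀ + m) := fun h => hm (hSfin.mem_toFinset.mpr h)
      simp [Set.indicator, this]
  rw [hLHS, hRHS]
  have hnn : ∀ m ∈ T, 0 ≤ Real.exp (p * (m + 1)) - Real.exp (p * m) := by
    intro m _
    have : p * m ≤ p * (m + 1) := by nlinarith [Real.exp_pos p]
    linarith [Real.exp_le_exp.mpr this]
  rw [← ENNReal.ofReal_sum_of_nonneg hnn, ← ENNReal.ofReal_one, ← ENNReal.ofReal_add zero_le_one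
    (Finset.sum_nonneg hnn)]
  exact ENNReal.ofReal_le_ofReal (by linarith [exp_card_le hp T])

theorem stmt2 {Ω : Type*} [MeasurableSpace Ω] (P : Measure Ω) [IsProbabilityMeasure P]
    (A : ℕ → Set Ω) (hA : ∀ n, MeasurableSet (A n))
    (b M : ℝ) (hb : b ∈ Set.Ioo (0 : ℝ) 1) (hM : 0 < M) (n₀ : ℕ)
    (hbound : ∀ m : ℕ, n₀ ≤ m → P (A m) ≤ ENNReal.ofReal (M * b ^ m))
    (p : ℝ) (hp : 0 ≤ p) (hp' : p < -Real.log b) :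
    (∫⁻ ω, eexp p (∑' m : ℕ, Set.indicator (A (n₀ + m)) (fun _ => (1 : ℝ≥0∞)) ω) ∂P)
      ≤ ENNReal.ofReal (1 + M * b ^ ((n₀ : ℤ) - 1) / (1 - Real.exp p * b)) := by
  obtain ⟨hb0, hb1⟩ := hb
  set q : ℝ := Real.exp p * b with hqdef
  have hE1 : 0 ≤ Real.exp p - 1 := by linarith [Real.one_le_exp hp]
  have hq0 : 0 < q := mul_pos (Real.exp_pos p) hb0
  have hq1 : q < 1 := by
    have h1 : Real.exp p < Real.exp (-Real.log b) := Real.exp_lt_exp.mpr hp'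
    rw [Real.exp_neg, Real.exp_log hb0] at h1
    have h2 := mul_lt_mul_of_pos_right h1 hb0
    rwa [inv_mul_cancel₀ hb0.ne'] at h2
  have h1q : (0:ℝ) < 1 - q := by linarith
  have hindone : ∀ m : ℕ,
      (∫⁻ ω, Set.indicator (A (n₀ + m)) (fun _ => (1 : ℝ≥0∞)) ω ∂P) = P (A (n₀ + m)) :=
    fun m => lintegral_indicator_one (hA _)
  have hind : ∀ m : ℕ, Measurable (fun ω => Set.indicator (A (n₀ + m)) (fun _ => (1 : ℝ≥0∞)) ω) :=
    fun m => measurable_const.indicator (hA _)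
  have hOmeas : Measurable (fun ω => ∑' m : ℕ, Set.indicator (A (n₀ + m)) (fun _ => (1 : ℝ≥0∞)) ω) :=
    Measurable.ennreal_tsum hind
  -- a.e. finiteness
  have hintO : (∫⁻ ω, ∑' m : ℕ, Set.indicator (A (n₀ + m)) (fun _ => (1 : ℝ≥0∞)) ω ∂P) ≠ ⊤ := by
    rw [lintegral_tsum fun m => (hind m).aemeasurable]
    have hle : (∑' m : ℕ, ∫⁻ ω, Set.indicator (A (n₀ + m)) (fun _ => (1 : ℝ≥0∞)) ω ∂P)
        ≤ ∑' m : ℕ, ENNReal.ofReal M * ENNReal.ofReal b ^ (n₀ + m) := by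
      refine ENNReal.tsum_le_tsum fun m => ?_
      rw [hindone m]
      refine (hbound _ (Nat.le_add_right _ _)).trans ?_
      rw [ENNReal.ofReal_mul hM.le, ENNReal.ofReal_pow hb0.le]
    refine ne_top_of_le_ne_top ?_ hle
    rw [ENNReal.tsum_mul_left]
    refine ENNReal.mul_ne_top ENNReal.ofReal_ne_top ?_
    have h3 : (∑' m : ℕ, ENNReal.ofReal b ^ (n₀ + m))
        = ENNReal.ofReal b ^ n₀ * ∑' m : ℕ, ENNReal.ofReal b ^ m := by
      rw [← ENNReal.tsum_mul_left]
      simp [pow_add]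
    rw [h3, ENNReal.tsum_geometric]
    refine ENNReal.mul_ne_top (ENNReal.pow_ne_top ENNReal.ofReal_ne_top) (ENNReal.inv_ne_top.mpr ?_)
    have hlt : ENNReal.ofReal b < 1 := ENNReal.ofReal_lt_one.mpr hb1
    simp [tsub_eq_zero_iff_le, not_le, hlt, hb1]
  have hae : ∀ᵐ ω ∂P, (∑' m : ℕ, Set.indicator (A (n₀ + m)) (fun _ => (1 : ℝ≥0∞)) ω) < ⊤ :=
    ae_lt_top hOmeas hintO
  -- the geometric sum bound
  have hsum : (∑' m : ℕ, ENNReal.ofReal (Real.exp (p * (m + 1)) - Real.exp (p * m)) * P (A (n₀ + m)))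
      ≤ ENNReal.ofReal (M * b ^ ((n₀ : ℤ) - 1) / (1 - q)) := by
    set D : ℝ := (Real.exp p - 1) * M * b ^ n₀ with hD
    have hD0 : 0 ≤ D := mul_nonneg (mul_nonneg hE1 hM.le) (pow_nonneg hb0.le _)
    have hterm : ∀ m : ℕ, ENNReal.ofReal (Real.exp (p * (m + 1)) - Real.exp (p * m)) *
        P (A (n₀ + m)) ≤ ENNReal.ofReal D * ENNReal.ofReal q ^ m := by
      intro m
      have hnn : 0 ≤ Real.exp (p * (m + 1)) - Real.exp (p * m) := by
        have : p * m ≤ p * (m + 1) := by nlinarith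
        linarith [Real.exp_le_exp.mpr this]
      refine le_trans (mul_le_mul_right (hbound _ (Nat.le_add_right _ _)) _) ?_
      rw [← ENNReal.ofReal_pow hq0.le, ← ENNReal.ofReal_mul hD0,
        ← ENNReal.ofReal_mul hnn]
      refine ENNReal.ofReal_le_ofReal ?_
      have hexp : Real.exp (p * (m + 1)) - Real.exp (p * m)
          = (Real.exp p - 1) * Real.exp (p * m) := by
        rw [mul_add, Real.exp_add]; ring
      have hexpm : Real.exp (p * m) ≤ (Real.exp p) ^ m := by
        rw [← Real.exp_nat_mul]
        exact Real.exp_le_exp.mpr (by rw [mul_comm])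
      have hqpow : q ^ m = Real.exp p ^ m * b ^ m := by rw [hqdef, mul_pow]
      calc (Real.exp (p * (m + 1)) - Real.exp (p * m)) * (M * b ^ (n₀ + m))
          = (Real.exp p - 1) * Real.exp (p * m) * (M * (b ^ n₀ * b ^ m)) := by
            rw [hexp, pow_add]
        _ ≤ (Real.exp p - 1) * Real.exp p ^ m * (M * (b ^ n₀ * b ^ m)) := by
            have hpos : (0:ℝ) ≤ M * (b ^ n₀ * b ^ m) := by positivity
            nlinarith [mul_le_mul_of_nonneg_left hexpm hE1]
        _ = D * q ^ m := by rw [hqpow, hD]; ring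
    refine le_trans (ENNReal.tsum_le_tsum hterm) ?_
    rw [ENNReal.tsum_mul_left, ENNReal.tsum_geometric]
    have e1 : (1 : ℝ≥0∞) - ENNReal.ofReal q = ENNReal.ofReal (1 - q) := by
      rw [ENNReal.ofReal_sub _ hq0.le, ENNReal.ofReal_one]
    have e2 : (ENNReal.ofReal (1 - q))⁻¹ = ENNReal.ofReal (1 - q)⁻¹ :=
      (ENNReal.ofReal_inv_of_pos h1q).symm
    rw [e1, e2, ← ENNReal.ofReal_mul hD0]
    refine ENNReal.ofReal_le_ofReal ?_
    have hzD : b ^ ((n₀ : ℤ) - 1) = b ^ n₀ / b := by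
      rw [zpow_sub₀ hb0.ne', zpow_natCast, zpow_one, div_eq_mul_inv]
    rw [hzD, div_eq_mul_inv (M * (b ^ n₀ / b))]
    have hkey : D ≤ M * (b ^ n₀ / b) := by
      rw [hD]
      have h1 : Real.exp p - 1 ≤ b⁻¹ := by
        have h2 : Real.exp p ≤ b⁻¹ := by
          have h3 : Real.exp p * b < 1 := hq1
          rw [← lt_div_iff₀ hb0] at h3
          simpa [one_div] using h3.le
        linarith [inv_pos.mpr hb0]
      calc (Real.exp p - 1) * M * b ^ n₀ = M * (b ^ n₀ * (Real.exp p - 1)) := by ring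
        _ ≤ M * (b ^ n₀ * b⁻¹) :=
            mul_le_mul_of_nonneg_left (mul_le_mul_of_nonneg_left h1 (pow_nonneg hb0.le _)) hM.le
        _ = M * (b ^ n₀ / b) := by rw [div_eq_mul_inv]
    exact mul_le_mul_of_nonneg_right hkey (by positivity)
  -- main chain
  calc (∫⁻ ω, eexp p (∑' m : ℕ, Set.indicator (A (n₀ + m)) (fun _ => (1 : ℝ≥0∞)) ω) ∂P)
      ≤ ∫⁻ ω, (1 + ∑' m : ℕ, ENNReal.ofReal (Real.exp (p * (m + 1)) - Real.exp (p * m)) *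
          Set.indicator (A (n₀ + m)) (fun _ => (1 : ℝ≥0∞)) ω) ∂P := by
        refine lintegral_mono_ae (hae.mono fun ω hω => ?_)
        exact pointwise_bound A n₀ hp ω hω.ne
    _ = 1 + ∑' m : ℕ, ENNReal.ofReal (Real.exp (p * (m + 1)) - Real.exp (p * m)) * P (A (n₀ + m)) := by
        rw [lintegral_add_left measurable_const, lintegral_const, measure_univ, mul_one]
        congr 1
        rw [lintegral_tsum fun m => (((hind m).const_mul _)).aemeasurable]
        refine tsum_congr fun m => ?_
        rw [lintegral_const_mul _ (hind m), hindone m]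
    _ ≤ 1 + ENNReal.ofReal (M * b ^ ((n₀ : ℤ) - 1) / (1 - q)) := by gcongr
    _ = ENNReal.ofReal (1 + M * b ^ ((n₀ : ℤ) - 1) / (1 - q)) := by
        rw [ENNReal.ofReal_add zero_le_one (by positivity), ENNReal.ofReal_one]
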